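/- arXiv:2011.03342 — 3 statements merged into one kernel-verified Lean document; each statement's English description precedes it below -/
import Mathlib

section
/- For PSD operators A₁ and A₂ on a finite-dimensional Hilbert space, the minimum over operators T with 0 ≤ T ≤ I of Tr(A₁(I−T)) + Tr(A₂T) equals ½(Tr A₁ + Tr A₂ − ‖A₁ − A₂‖₁), where ‖·‖₁ is the trace norm. -/
open Matrix ComplexOrder

lemma psd_trace_nonneg {d : ℕ} {A : Matrix (Fin d) (Fin d) ℂ} (hA : A.PosSemidef) :
    0 ≤ A.trace := by
  rw [Matrix.trace]
  apply Finset.sum_nonneg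
  intro i _
  exact hA.diag_nonneg

open scoped MatrixOrder in
lemma psd_trace_mul_nonneg {d : ℕ} {A B : Matrix (Fin d) (Fin d) ℂ}
    (hA : A.PosSemidef) (hB : B.PosSemidef) : 0 ≤ (A * B).trace := by
  classical
  obtain ⟨X, hX, -, hXA⟩ :=
    sub_zero A ▸ CFC.exists_sqrt_of_isSelfAdjoint_of_quasispectrumRestricts hA.isHermitian
      (QuasispectrumRestricts.nnreal_of_nonneg (Matrix.nonneg_iff_posSemidef.mpr hA))
  rw [sub_zero] at hXA
  subst hXA
  rw [Matrix.mul_assoc, Matrix.trace_mul_comm]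
  have := hB.mul_mul_conjTranspose_same X
  have h3 : Xᴴ = X := hX.star_eq
  rw [h3] at this
  exact this.trace_nonneg

theorem holevo_helstrom_generalized {d : ℕ}
    (A₁ A₂ : Matrix (Fin d) (Fin d) ℂ)
    (hA₁ : A₁.PosSemidef) (hA₂ : A₂.PosSemidef) :
    IsLeast
      {x : ℝ | ∃ T : Matrix (Fin d) (Fin d) ℂ,
        T.PosSemidef ∧ (1 - T).PosSemidef ∧
        (A₁ * (1 - T)).trace + (A₂ * T).trace = ((x : ℝ) : ℂ)}
      (1 / 2 * (A₁.trace.re + A₂.trace.re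
        - ∑ i, |(hA₁.1.sub hA₂.1).eigenvalues i|)) := by
  classical
  have hΔ : (A₁ - A₂).IsHermitian := hA₁.1.sub hA₂.1
  set lam := hΔ.eigenvalues with hlam
  set u : Matrix (Fin d) (Fin d) ℂ := (hΔ.eigenvectorUnitary : Matrix (Fin d) (Fin d) ℂ) with hudef
  have hu1 : star u * u = 1 := Matrix.mem_unitaryGroup_iff'.mp hΔ.eigenvectorUnitary.2
  have hu2 : u * star u = 1 := Matrix.mem_unitaryGroup_iff.mp hΔ.eigenvectorUnitary.2
  set M : (Fin d → ℝ) → Matrix (Fin d) (Fin d) ℂ :=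
    fun f => u * Matrix.diagonal (RCLike.ofReal ∘ f) * star u with hMdef
  have hMmul : ∀ f g, M f * M g = M (f * g) := by
    intro f g
    simp only [hMdef]
    rw [mul_assoc, mul_assoc, ← mul_assoc (star u), ← mul_assoc (star u), hu1, one_mul,
      ← mul_assoc, ← mul_assoc, mul_assoc u, Matrix.diagonal_mul_diagonal]
    have h : (fun i => (RCLike.ofReal ∘ f) i * (RCLike.ofReal ∘ g) i) =
        (RCLike.ofReal ∘ (f * g) : Fin d → ℂ) := by
      funext i; simp [Pi.mul_apply]
    rw [h]
  have hMtr : ∀ f, (M f).trace = ∑ i, ((f i : ℝ) : ℂ) := by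
    intro f
    simp only [hMdef]
    rw [Matrix.trace_mul_cycle, hu1, one_mul, Matrix.trace_diagonal]
    simp
  have hMpsd : ∀ f, (∀ i, 0 ≤ f i) → (M f).PosSemidef := by
    intro f hf
    have hd : (Matrix.diagonal (RCLike.ofReal ∘ f) : Matrix (Fin d) (Fin d) ℂ).PosSemidef := by
      refine Matrix.posSemidef_diagonal_iff.mpr fun i => ?_
      simp only [Function.comp_apply]
      exact RCLike.ofReal_nonneg.mpr (hf i)
    have := hd.mul_mul_conjTranspose_same u
    simpa [hMdef, Matrix.star_eq_conjTranspose] using this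
  have hMsub : ∀ f g, M f - M g = M (f - g) := by
    intro f g
    simp only [hMdef]
    rw [← Matrix.sub_mul, ← Matrix.mul_sub, Matrix.diagonal_sub]
    have h : (fun i => (RCLike.ofReal ∘ f) i - (RCLike.ofReal ∘ g) i) =
        (RCLike.ofReal ∘ (f - g) : Fin d → ℂ) := by
      funext i; simp
    rw [h]
  have hMone : M (fun _ => 1) = 1 := by
    simp only [hMdef]
    have h : (RCLike.ofReal ∘ (fun _ : Fin d => (1 : ℝ)) : Fin d → ℂ) = fun _ => 1 := by
      funext i; simp
    rw [h, Matrix.diagonal_one, mul_one, hu2]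
  have hspec : A₁ - A₂ = M lam := hΔ.spectral_theorem
  -- trace of A₁ and A₂ are real
  have hre : ∀ (A : Matrix (Fin d) (Fin d) ℂ), A.IsHermitian → ((A.trace.re : ℝ) : ℂ) = A.trace := by
    intro A hA
    have h := congrArg Matrix.trace hA.eq
    rw [Matrix.trace_conjTranspose] at h
    exact Complex.conj_eq_iff_re.mp h
  -- sum of eigenvalues
  have hsum : ∑ i, lam i = A₁.trace.re - A₂.trace.re := by
    have h1 : (A₁ - A₂).trace = ∑ i, ((lam i : ℝ) : ℂ) := by
      rw [hspec]; exact hMtr lam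
    rw [Matrix.trace_sub] at h1
    have h2 : (∑ i, ((lam i : ℝ) : ℂ)) = ((∑ i, lam i : ℝ) : ℂ) := by push_cast; ring
    rw [h2, ← hre A₁ hA₁.1, ← hre A₂ hA₂.1] at h1
    exact_mod_cast h1.symm
  -- generic trace rearrangement
  have hrearr : ∀ T : Matrix (Fin d) (Fin d) ℂ,
      (A₁ * (1 - T)).trace + (A₂ * T).trace = A₁.trace - ((A₁ - A₂) * T).trace := by
    intro T
    rw [Matrix.mul_sub, mul_one, Matrix.trace_sub, Matrix.sub_mul, Matrix.trace_sub]
    ring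
  constructor
  · -- membership: T = projection onto nonneg eigenvalues
    set χ : Fin d → ℝ := fun i => if 0 ≤ lam i then 1 else 0 with hχ
    refine ⟨M χ, hMpsd χ (fun i => by by_cases h : 0 ≤ lam i <;> simp [hχ, h]), ?_, ?_⟩
    · have h1 : (1 : Matrix (Fin d) (Fin d) ℂ) - M χ = M (fun i => 1 - χ i) := by
        rw [← hMone, hMsub]; rfl
      rw [h1]
      exact hMpsd _ (fun i => by by_cases h : 0 ≤ lam i <;> simp [hχ, h])
    · rw [hrearr, hspec, hMmul, hMtr]
      have hval : ∑ i, (((lam * χ) i : ℝ) : ℂ) = ((∑ i, if 0 ≤ lam i then lam i else 0 : ℝ) : ℂ) := by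
        push_cast
        refine Finset.sum_congr rfl fun i _ => ?_
        by_cases h : 0 ≤ lam i <;> simp [hχ, Pi.mul_apply, h]
      rw [hval]
      conv_lhs => rw [← hre A₁ hA₁.1]
      rw [← Complex.ofReal_sub, Complex.ofReal_inj]
      have hpos : ∑ i, (if 0 ≤ lam i then lam i else 0) = (∑ i, lam i + ∑ i, |lam i|) / 2 := by
        rw [← Finset.sum_add_distrib, eq_div_iff (by norm_num : (2:ℝ) ≠ 0), Finset.sum_mul]
        refine Finset.sum_congr rfl fun i _ => ?_
        rcases le_or_gt 0 (lam i) with h | h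
        · rw [if_pos h, abs_of_nonneg h]; ring
        · rw [if_neg (not_le.mpr h), abs_of_neg h]; ring
      rw [hpos, hsum]
      ring
  · -- lower bound
    rintro x ⟨T, hT, h1T, heq⟩
    rw [hrearr] at heq
    set P := M (fun i => max (lam i) 0) with hP
    set N := M (fun i => max (-lam i) 0) with hN
    have hPpsd : P.PosSemidef := hMpsd _ (fun i => le_max_right _ _)
    have hNpsd : N.PosSemidef := hMpsd _ (fun i => le_max_right _ _)
    have hPN : A₁ - A₂ = P - N := by
      have hfun : ((fun i => max (lam i) 0) - fun i => max (-lam i) 0) = lam := by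
        funext i
        simp only [Pi.sub_apply]
        rcases le_or_gt 0 (lam i) with h | h
        · rw [max_eq_left h, max_eq_right (by linarith)]; ring
        · rw [max_eq_right h.le, max_eq_left (by linarith)]; ring
      rw [hspec, hP, hN, hMsub, hfun]
    have h1 : 0 ≤ (N * T).trace := psd_trace_mul_nonneg hNpsd hT
    have h2 : 0 ≤ (P * (1 - T)).trace := psd_trace_mul_nonneg hPpsd h1T
    have hPtr : (P * T).trace = P.trace - (P * (1 - T)).trace := by
      rw [Matrix.mul_sub, mul_one, Matrix.trace_sub]; ring
    have hsplit : ((A₁ - A₂) * T).trace = (P * T).trace - (N * T).trace := by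
      rw [hPN, Matrix.sub_mul, Matrix.trace_sub]
    -- real parts
    have h1re : 0 ≤ ((N * T).trace).re := by
      exact (Complex.le_def.mp h1).1
    have h2re : 0 ≤ ((P * (1 - T)).trace).re := by
      exact (Complex.le_def.mp h2).1
    have hPtrval : P.trace.re = ∑ i, max (lam i) 0 := by
      rw [hMtr]
      have : (∑ i, ((max (lam i) 0 : ℝ) : ℂ)) = ((∑ i, max (lam i) 0 : ℝ) : ℂ) := by
        push_cast; ring
      rw [this, Complex.ofReal_re]
    have hx : x = A₁.trace.re - (((A₁ - A₂) * T).trace).re := by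
      have := congrArg Complex.re heq
      rw [Complex.ofReal_re, Complex.sub_re] at this
      linarith [this]
    have hbound : (((A₁ - A₂) * T).trace).re ≤ ∑ i, max (lam i) 0 := by
      rw [hsplit, Complex.sub_re, hPtr, Complex.sub_re, hPtrval]
      linarith
    have hmaxsum : ∑ i, max (lam i) 0 = (∑ i, lam i + ∑ i, |lam i|) / 2 := by
      rw [← Finset.sum_add_distrib, eq_div_iff (by norm_num : (2:ℝ) ≠ 0), Finset.sum_mul]
      refine Finset.sum_congr rfl fun i _ => ?_
      rcases le_or_gt 0 (lam i) with h | h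
      · rw [max_eq_left h, abs_of_nonneg h]; ring
      · rw [max_eq_right h.le, abs_of_neg h]; ring
    rw [hx]
    rw [hmaxsum, hsum] at hbound
    linarith
end

section
/- For PSD operators A₁ and A₂, the minimum of Tr(A₁(I−T)) + Tr(A₂T) over 0 ≤ T ≤ I is attained at T = {A₁ − A₂ ≥ 0}, the orthogonal projection onto the direct sum of eigenspaces of A₁ − A₂ with nonnegative eigenvalues. -/
open Matrix ComplexOrder

theorem holevo_helstrom_optimal_test {d : ℕ}
    (A₁ A₂ : Matrix (Fin d) (Fin d) ℂ)
    (hA₁ : A₁.PosSemidef) (hA₂ : A₂.PosSemidef) :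
    let h : (A₁ - A₂).IsHermitian := hA₁.1.sub hA₂.1
    let T : Matrix (Fin d) (Fin d) ℂ :=
      (h.eigenvectorUnitary : Matrix (Fin d) (Fin d) ℂ) *
        Matrix.diagonal (fun i => if 0 ≤ h.eigenvalues i then (1 : ℂ) else 0) *
        star (h.eigenvectorUnitary : Matrix (Fin d) (Fin d) ℂ)
    T.PosSemidef ∧ (1 - T).PosSemidef ∧
    ∀ T' : Matrix (Fin d) (Fin d) ℂ, T'.PosSemidef → (1 - T').PosSemidef →
      (A₁ * (1 - T)).trace + (A₂ * T).trace
        ≤ (A₁ * (1 - T')).trace + (A₂ * T').trace := by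
  intro h T
  set U : Matrix (Fin d) (Fin d) ℂ := (h.eigenvectorUnitary : Matrix (Fin d) (Fin d) ℂ) with hUdef
  have hstar : star U = Uᴴ := rfl
  have hUU : U * Uᴴ = 1 := Matrix.mem_unitaryGroup_iff.mp h.eigenvectorUnitary.2
  have hU'U : Uᴴ * U = 1 := Matrix.mem_unitaryGroup_iff'.mp h.eigenvectorUnitary.2
  set p : Fin d → ℂ := fun i => if 0 ≤ h.eigenvalues i then (1 : ℂ) else 0 with hp
  have hpmem : ∀ i, p i = 0 ∨ p i = 1 := by
    intro i; by_cases hi : 0 ≤ h.eigenvalues i <;> simp [hp, hi]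
  have hP : (Matrix.diagonal p).PosSemidef := by
    refine Matrix.posSemidef_diagonal_iff.mpr fun i => ?_
    rcases hpmem i with hi | hi <;> rw [hi] <;> norm_num
  have hQ : (Matrix.diagonal (fun i => 1 - p i)).PosSemidef := by
    refine Matrix.posSemidef_diagonal_iff.mpr fun i => ?_
    rcases hpmem i with hi | hi <;> rw [hi] <;> norm_num
  have hTpsd : T.PosSemidef := by
    rw [show T = U * Matrix.diagonal p * Uᴴ from rfl]
    exact hP.mul_mul_conjTranspose_same U
  have h1T : (1 : Matrix (Fin d) (Fin d) ℂ) - T = U * Matrix.diagonal (fun i => 1 - p i) * Uᴴ := by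
    have : Matrix.diagonal (fun i => 1 - p i) = 1 - Matrix.diagonal p := by
      rw [← Matrix.diagonal_one, ← Matrix.diagonal_sub]
    rw [this, Matrix.mul_sub, Matrix.mul_one, Matrix.sub_mul, hUU]
    rfl
  have h1Tpsd : ((1 : Matrix (Fin d) (Fin d) ℂ) - T).PosSemidef := by
    rw [h1T]; exact hQ.mul_mul_conjTranspose_same U
  refine ⟨hTpsd, h1Tpsd, ?_⟩
  intro T' hT' h1T'
  set D : Matrix (Fin d) (Fin d) ℂ := A₁ - A₂ with hD
  have expand : ∀ S : Matrix (Fin d) (Fin d) ℂ,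
      (A₁ * (1 - S)).trace + (A₂ * S).trace = A₁.trace - (D * S).trace := by
    intro S
    rw [Matrix.mul_sub, Matrix.mul_one, hD, Matrix.sub_mul, Matrix.trace_sub,
      Matrix.trace_sub]
    ring
  rw [expand T, expand T']
  refine sub_le_sub_left ?_ _
  -- reduce to trace inequality
  have hspec : D = U * Matrix.diagonal (fun i => (h.eigenvalues i : ℂ)) * Uᴴ := by
    have := h.spectral_theorem
    convert this using 2
    rw [Unitary.conjStarAlgAut_apply]; rfl
  set Λ : Matrix (Fin d) (Fin d) ℂ := Matrix.diagonal (fun i => (h.eigenvalues i : ℂ)) with hΛ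
  -- trace (D * T) = ∑ λ i * p i
  have hDT : (D * T).trace = ∑ i, (h.eigenvalues i : ℂ) * p i := by
    have : D * T = U * (Λ * Matrix.diagonal p) * Uᴴ := by
      rw [hspec, show T = U * Matrix.diagonal p * Uᴴ from rfl]
      simp only [Matrix.mul_assoc]
      rw [← Matrix.mul_assoc Uᴴ U (Matrix.diagonal p * Uᴴ), hU'U, Matrix.one_mul]
    rw [this, Matrix.trace_mul_cycle, ← Matrix.mul_assoc, hU'U, Matrix.one_mul,
      Matrix.diagonal_mul_diagonal, Matrix.trace_diagonal]
  -- trace (D * T') = ∑ λ i * M i i with M = Uᴴ T' U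
  set M : Matrix (Fin d) (Fin d) ℂ := Uᴴ * T' * U with hM
  have hDT' : (D * T').trace = ∑ i, (h.eigenvalues i : ℂ) * M i i := by
    have : (D * T').trace = (Λ * M).trace := by
      rw [hspec, hM, Matrix.mul_assoc, Matrix.mul_assoc, Matrix.trace_mul_comm]
      simp only [Matrix.mul_assoc]
    rw [this, Matrix.trace]
    refine Finset.sum_congr rfl fun i _ => ?_
    simp [Matrix.diag, Matrix.mul_apply, hΛ, Matrix.diagonal_apply, Finset.sum_ite_eq,
      ite_mul]
  have hMpsd : M.PosSemidef := by
    have := hT'.conjTranspose_mul_mul_same U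
    simpa [hM, Matrix.mul_assoc] using this
  have h1Mpsd : ((1 : Matrix (Fin d) (Fin d) ℂ) - M).PosSemidef := by
    have := h1T'.conjTranspose_mul_mul_same U
    have e : Uᴴ * (1 - T') * U = 1 - M := by
      rw [Matrix.mul_sub, Matrix.mul_one, Matrix.sub_mul, hU'U, hM]
    rwa [e] at this
  have hdiag_nonneg : ∀ i, (0 : ℂ) ≤ M i i := by
    intro i
    have := hMpsd.dotProduct_mulVec_nonneg (Pi.single i 1)
    simpa [dotProduct, Matrix.mulVec, Pi.single_apply, Finset.sum_ite_eq,
      Finset.sum_ite_eq'] using this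
  have hdiag_le_one : ∀ i, M i i ≤ 1 := by
    intro i
    have := h1Mpsd.dotProduct_mulVec_nonneg (Pi.single i 1)
    have h2 : (0 : ℂ) ≤ ((1 : Matrix (Fin d) (Fin d) ℂ) - M) i i := by
      simpa [dotProduct, Matrix.mulVec, Pi.single_apply, Finset.sum_ite_eq,
        Finset.sum_ite_eq'] using this
    have h3 : (0 : ℂ) ≤ 1 - M i i := by
      simpa [Matrix.sub_apply, Matrix.one_apply] using h2
    exact sub_nonneg.mp h3
  rw [hDT, hDT']
  refine Finset.sum_le_sum fun i _ => ?_
  by_cases hi : 0 ≤ h.eigenvalues i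
  · have hlam : (0 : ℂ) ≤ (h.eigenvalues i : ℂ) := by
      rw [Complex.zero_le_real]; exact hi
    calc (h.eigenvalues i : ℂ) * M i i ≤ (h.eigenvalues i : ℂ) * 1 :=
          mul_le_mul_of_nonneg_left (hdiag_le_one i) hlam
      _ = (h.eigenvalues i : ℂ) * p i := by simp [hp, hi]
  · have hlam : (h.eigenvalues i : ℂ) ≤ 0 := by
      exact_mod_cast (not_le.mp hi).le
    have : (h.eigenvalues i : ℂ) * M i i ≤ 0 :=
      mul_nonpos_of_nonpos_of_nonneg hlam (hdiag_nonneg i)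
    simpa [hp, hi] using this
end

section
/- Let p, q, t, s ∈ (0,1) with t + s < 1 and let A(n) be the 3×3 symmetric matrix with entries A₁₁ = tⁿ − pⁿ, A₁₂ = √((ts)ⁿ), A₁₃ = √(tⁿ(1−tⁿ−sⁿ)), A₂₂ = sⁿ + qⁿ, A₂₃ = √(sⁿ(1−tⁿ−sⁿ)), A₃₃ = 1 − tⁿ − sⁿ. Then for all sufficiently large n, A(n) has exactly one negative eigenvalue, and the trace norm satisfies ‖A(n)‖₁ = 1 + pⁿ + qⁿ − 2(pt)ⁿ + o((pt)ⁿ) as n → ∞. -/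
set_option maxHeartbeats 2000000

open Matrix ComplexOrder

open Matrix

lemma det_sub_smul_eq_prod {n : Type*} [Fintype n] [DecidableEq n]
    {A : Matrix n n ℝ} (hA : A.IsHermitian) (x : ℝ) :
    (A - x • (1 : Matrix n n ℝ)).det = ∏ i, (hA.eigenvalues i - x) := by
  have h1 : (hA.eigenvectorUnitary : Matrix n n ℝ) * star (hA.eigenvectorUnitary : Matrix n n ℝ) = 1 :=
    Matrix.mem_unitaryGroup_iff.mp hA.eigenvectorUnitary.2
  have key : A - x • (1 : Matrix n n ℝ) =
      (hA.eigenvectorUnitary : Matrix n n ℝ) *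
        diagonal (fun i => hA.eigenvalues i - x) *
        star (hA.eigenvectorUnitary : Matrix n n ℝ) := by
    conv_lhs => rw [hA.spectral_theorem]
    have h2 : diagonal (fun i => hA.eigenvalues i - x) =
        diagonal (RCLike.ofReal ∘ hA.eigenvalues) - x • (1 : Matrix n n ℝ) := by
      rw [smul_one_eq_diagonal, diagonal_sub]
      rfl
    rw [h2, Matrix.mul_sub, Matrix.sub_mul]
    congr 1
    rw [Matrix.mul_smul, Matrix.mul_one, Matrix.smul_mul, h1]
  rw [key, Matrix.det_mul_right_comm, Matrix.det_mul, h1, Matrix.det_one, one_mul, det_diagonal]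

lemma trace_eq_sum_eig {n : Type*} [Fintype n] [DecidableEq n]
    {A : Matrix n n ℝ} (hA : A.IsHermitian) :
    A.trace = ∑ i, hA.eigenvalues i := by
  have h1 : star (hA.eigenvectorUnitary : Matrix n n ℝ) * (hA.eigenvectorUnitary : Matrix n n ℝ) = 1 :=
    Matrix.mem_unitaryGroup_iff'.mp hA.eigenvectorUnitary.2
  conv_lhs => rw [hA.spectral_theorem]
  rw [Unitary.conjStarAlgAut_apply, Matrix.trace_mul_cycle, h1, Matrix.one_mul, trace_diagonal]
  rfl
open Matrix

lemma det_explicit (T S u P Q x : ℝ) (hT : 0 ≤ T) (hS : 0 ≤ S) (hu : 0 ≤ u) :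
    Matrix.det !![T - P - x, Real.sqrt (T*S), Real.sqrt (T*u);
       Real.sqrt (T*S), S + Q - x, Real.sqrt (S*u);
       Real.sqrt (T*u), Real.sqrt (S*u), u - x]
    = (T - P - x) * ((S + Q - x)*(u - x) - S*u) + T*S*x + T*u*(x - Q) := by
  obtain ⟨a, ha, rfl⟩ : ∃ a, 0 ≤ a ∧ a^2 = T := ⟨Real.sqrt T, Real.sqrt_nonneg T, Real.sq_sqrt hT⟩
  obtain ⟨b, hb, rfl⟩ : ∃ b, 0 ≤ b ∧ b^2 = S := ⟨Real.sqrt S, Real.sqrt_nonneg S, Real.sq_sqrt hS⟩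
  obtain ⟨c, hc, rfl⟩ : ∃ c, 0 ≤ c ∧ c^2 = u := ⟨Real.sqrt u, Real.sqrt_nonneg u, Real.sq_sqrt hu⟩
  rw [show a^2*b^2 = (a*b)^2 by ring, show a^2*c^2 = (a*c)^2 by ring,
      show b^2*c^2 = (b*c)^2 by ring,
      Real.sqrt_sq (by positivity), Real.sqrt_sq (by positivity), Real.sqrt_sq (by positivity),
      Matrix.det_fin_three]
  norm_num [Matrix.cons_val_two, Matrix.vecHead, Matrix.vecTail]
  ring

lemma unique_neg_of (f : Fin 3 → ℝ) (hprod : ∏ i, f i < 0) (hsum : 0 < ∑ i, f i) :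
    ∃ i₀, f i₀ < 0 ∧ ∀ j, j ≠ i₀ → 0 < f j := by
  rw [Fin.prod_univ_three] at hprod
  rw [Fin.sum_univ_three] at hsum
  have hf0 : f 0 ≠ 0 := by intro h; rw [h] at hprod; norm_num at hprod
  have hf1 : f 1 ≠ 0 := by intro h; rw [h] at hprod; norm_num at hprod
  have hf2 : f 2 ≠ 0 := by intro h; rw [h] at hprod; norm_num at hprod
  rcases hf0.lt_or_gt with h0 | h0 <;> rcases hf1.lt_or_gt with h1 | h1 <;>
    rcases hf2.lt_or_gt with h2 | h2
  · linarith
  · nlinarith [mul_pos_of_neg_of_neg h0 h1]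
  · nlinarith [mul_pos_of_neg_of_neg h0 h2]
  · exact ⟨0, h0, fun j hj => by fin_cases j <;> simp_all⟩
  · nlinarith [mul_pos_of_neg_of_neg h1 h2]
  · exact ⟨1, h1, fun j hj => by fin_cases j <;> simp_all⟩
  · exact ⟨2, h2, fun j hj => by fin_cases j <;> simp_all⟩
  · nlinarith [mul_pos (mul_pos h0 h1) h2]

lemma sum_min_eq (f : Fin 3 → ℝ) (i₀ : Fin 3) (hneg : f i₀ < 0)
    (hpos : ∀ j, j ≠ i₀ → 0 < f j) :
    ∑ i, min (f i) 0 = f i₀ := by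
  rw [Finset.sum_eq_single i₀]
  · exact min_eq_left hneg.le
  · intro j _ hj
    exact min_eq_right (hpos j hj).le
  · simp

lemma abs_eq_sub_two_min (x : ℝ) : |x| = x - 2 * min x 0 := by
  rcases le_or_gt 0 x with h | h
  · rw [abs_of_nonneg h, min_eq_right h]; ring
  · rw [abs_of_neg h, min_eq_left h.le]; ring

lemma sign_lower (ε P Q T S : ℝ) (hε : 0 < ε) (hε2 : ε ≤ 1/2)
    (hP : 0 < P) (hQ : 0 < Q) (hT : 0 < T) (hS : 0 < S)
    (hPd : P ≤ ε/32) (hQd : Q ≤ ε/32) (hTd : T ≤ ε/32) (hSd : S ≤ ε/32) :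
    0 < (T - P - (-P + (1-ε)*(P*T))) *
          ((S + Q - (-P + (1-ε)*(P*T))) * ((1 - T - S) - (-P + (1-ε)*(P*T))) - S*(1 - T - S))
        + T*S*(-P + (1-ε)*(P*T)) + T*(1 - T - S)*((-P + (1-ε)*(P*T)) - Q) := by
  have key : (T - P - (-P + (1-ε)*(P*T))) *
          ((S + Q - (-P + (1-ε)*(P*T))) * ((1 - T - S) - (-P + (1-ε)*(P*T))) - S*(1 - T - S))
        + T*S*(-P + (1-ε)*(P*T)) + T*(1 - T - S)*((-P + (1-ε)*(P*T)) - Q)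
      = P*T*(ε*(P+Q) + (1-ε)*(Q*S) - (1-ε)*ε*(P*T) - (1-ε)*(P*Q) + (1-ε)^2*(P*Q*T)
          - (1-ε)*P^2 + 2*(1-ε)^2*(P^2*T) - (1-ε)^3*(P^2*T^2)) := by ring
  rw [key]
  apply mul_pos (mul_pos hP hT)
  have hT1 : T ≤ 1 := by linarith
  have hP1 : P ≤ 1 := by linarith
  have hc : (0:ℝ) < 1 - ε := by linarith
  have e1 : (1-ε)*ε*(P*T) ≤ ε/32*P := by nlinarith [mul_pos hP hT]
  have e2 : (1-ε)*(P*Q) ≤ ε/32*P := by nlinarith [mul_pos hP hQ]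
  have e3 : (1-ε)*P^2 ≤ ε/32*P := by nlinarith [mul_pos hP hP]
  have t2 : T^2 ≤ 1 := by nlinarith
  have pt2 : P*T^2 ≤ ε/32 := by nlinarith [mul_pos hT hT]
  have e4' : P^2*T^2 ≤ ε/32*P := by nlinarith [mul_le_mul_of_nonneg_left pt2 hP.le]
  have c3 : (1-ε)^3 ≤ 1 := by nlinarith [sq_nonneg (1-ε)]
  have e4 : (1-ε)^3*(P^2*T^2) ≤ ε/32*P := by
    nlinarith [mul_le_mul_of_nonneg_right c3 (by positivity : (0:ℝ) ≤ P^2*T^2)]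
  nlinarith [mul_pos hQ hS, mul_pos (mul_pos hP hQ) hT, mul_pos (mul_pos hP hP) hT]

lemma sign_upper (ε P Q T S : ℝ) (hε : 0 < ε) (hε2 : ε ≤ 1/2)
    (hP : 0 < P) (hQ : 0 < Q) (hT : 0 < T) (hS : 0 < S)
    (hPd : P ≤ ε/32) (hQd : Q ≤ ε/32) (hTd : T ≤ ε/32) (hSd : S ≤ ε/32) :
    (T - P - (-P + (1+ε)*(P*T))) *
          ((S + Q - (-P + (1+ε)*(P*T))) * ((1 - T - S) - (-P + (1+ε)*(P*T))) - S*(1 - T - S))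
        + T*S*(-P + (1+ε)*(P*T)) + T*(1 - T - S)*((-P + (1+ε)*(P*T)) - Q) < 0 := by
  have key : (T - P - (-P + (1+ε)*(P*T))) *
          ((S + Q - (-P + (1+ε)*(P*T))) * ((1 - T - S) - (-P + (1+ε)*(P*T))) - S*(1 - T - S))
        + T*S*(-P + (1+ε)*(P*T)) + T*(1 - T - S)*((-P + (1+ε)*(P*T)) - Q)
      = P*T*(-(ε*(P+Q)) + (1+ε)*(Q*S) + (1+ε)*ε*(P*T) - (1+ε)*(P*Q) + (1+ε)^2*(P*Q*T)
          - (1+ε)*P^2 + 2*(1+ε)^2*(P^2*T) - (1+ε)^3*(P^2*T^2)) := by ring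
  rw [key]
  apply mul_neg_of_pos_of_neg (mul_pos hP hT)
  have hT1 : T ≤ 1 := by linarith
  have hP1 : P ≤ 1 := by linarith
  have hQ1 : Q ≤ 1 := by linarith
  have e1 : (1+ε)*(Q*S) ≤ ε/16*Q := by nlinarith [mul_pos hQ hS]
  have hPT : P*T ≤ P*(ε/32) := mul_le_mul_of_nonneg_left hTd hP.le
  have hPT' : P*T ≤ ε/32*P := by linarith [hPT]
  have e2' : (1+ε)*ε*(P*T) ≤ 1*(P*T) :=
    mul_le_mul_of_nonneg_right (by nlinarith) (mul_pos hP hT).le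
  have e2 : (1+ε)*ε*(P*T) ≤ ε/32*P := by linarith
  have hQT : Q*T ≤ ε/32 := by nlinarith [mul_pos hQ hT]
  have hPQT : P*Q*T ≤ ε/32*P := by nlinarith [mul_le_mul_of_nonneg_left hQT hP.le]
  have e3 : (1+ε)^2*(P*Q*T) ≤ 3*(ε/32*P) := by
    nlinarith [mul_le_mul_of_nonneg_right (by nlinarith : (1+ε)^2 ≤ (3:ℝ)) (by positivity : (0:ℝ) ≤ P*Q*T), hPQT]
  have hPPT : P^2*T ≤ ε/32*P := by nlinarith [mul_le_mul_of_nonneg_left hPT' hP.le, mul_pos hP hT]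
  have e4 : 2*(1+ε)^2*(P^2*T) ≤ 5*(ε/32*P) := by
    nlinarith [mul_le_mul_of_nonneg_right (by nlinarith : (1+ε)^2 ≤ (5:ℝ)/2) (by positivity : (0:ℝ) ≤ P^2*T), hPPT]
  nlinarith [mul_pos (mul_pos hP hQ) (by linarith : (0:ℝ) < 1+ε), mul_pos (mul_pos hP hP) (by linarith : (0:ℝ) < 1+ε), mul_pos (mul_pos (mul_pos hP hP) (mul_pos hT hT)) (by positivity : (0:ℝ) < (1+ε)^3)]


theorem trace_norm_asymptotics_of_A_n
    (p q t s : ℝ)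
    (hp : p ∈ Set.Ioo (0 : ℝ) 1) (hq : q ∈ Set.Ioo (0 : ℝ) 1)
    (ht : t ∈ Set.Ioo (0 : ℝ) 1) (hs : s ∈ Set.Ioo (0 : ℝ) 1)
    (hts : t + s < 1)
    (A : ℕ → Matrix (Fin 3) (Fin 3) ℝ)
    (hAdef : ∀ n, A n =
      !![t ^ n - p ^ n, Real.sqrt ((t * s) ^ n), Real.sqrt (t ^ n * (1 - t ^ n - s ^ n));
         Real.sqrt ((t * s) ^ n), s ^ n + q ^ n, Real.sqrt (s ^ n * (1 - t ^ n - s ^ n));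
         Real.sqrt (t ^ n * (1 - t ^ n - s ^ n)), Real.sqrt (s ^ n * (1 - t ^ n - s ^ n)),
           1 - t ^ n - s ^ n])
    (hA : ∀ n, (A n).IsHermitian) :
    (∃ N : ℕ, ∀ n ≥ N,
      (Finset.univ.filter (fun i => (hA n).eigenvalues i < 0)).card = 1) ∧
    (∃ e : ℕ → ℝ,
      (∀ n, ∑ i, |(hA n).eigenvalues i|
          = 1 + p ^ n + q ^ n - 2 * (p * t) ^ n + e n) ∧
      Filter.Tendsto (fun n => e n / (p * t) ^ n) Filter.atTop (nhds 0)) := by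
  obtain ⟨hp0, hp1⟩ := hp
  obtain ⟨hq0, hq1⟩ := hq
  obtain ⟨ht0, ht1⟩ := ht
  obtain ⟨hs0, hs1⟩ := hs
  -- basic positivity
  have hPpos : ∀ n : ℕ, (0:ℝ) < p ^ n := fun n => pow_pos hp0 n
  have hQpos : ∀ n : ℕ, (0:ℝ) < q ^ n := fun n => pow_pos hq0 n
  have hTpos : ∀ n : ℕ, (0:ℝ) < t ^ n := fun n => pow_pos ht0 n
  have hSpos : ∀ n : ℕ, (0:ℝ) < s ^ n := fun n => pow_pos hs0 n
  have hu : ∀ n : ℕ, 1 ≤ n → (0:ℝ) < 1 - t ^ n - s ^ n := by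
    intro n hn
    have h1 : t ^ n ≤ t := pow_le_of_le_one ht0.le ht1.le (by omega)
    have h2 : s ^ n ≤ s := pow_le_of_le_one hs0.le hs1.le (by omega)
    linarith
  -- the product of (eigenvalues - x)
  have key : ∀ n : ℕ, 1 ≤ n → ∀ x : ℝ,
      ∏ i, ((hA n).eigenvalues i - x)
        = (t^n - p^n - x) * ((s^n + q^n - x) * ((1 - t^n - s^n) - x)
            - s^n * (1 - t^n - s^n)) + t^n * s^n * x
          + t^n * (1 - t^n - s^n) * (x - q^n) := by
    intro n hn x
    rw [← det_sub_smul_eq_prod (hA n) x]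
    have hM : A n - x • (1 : Matrix (Fin 3) (Fin 3) ℝ) =
        !![t^n - p^n - x, Real.sqrt (t^n * s^n), Real.sqrt (t^n * (1 - t^n - s^n));
           Real.sqrt (t^n * s^n), s^n + q^n - x, Real.sqrt (s^n * (1 - t^n - s^n));
           Real.sqrt (t^n * (1 - t^n - s^n)), Real.sqrt (s^n * (1 - t^n - s^n)),
             1 - t^n - s^n - x] := by
      rw [hAdef n]
      ext i j
      fin_cases i <;> fin_cases j <;>
        simp [Matrix.sub_apply, Matrix.smul_apply, Matrix.one_apply, mul_pow] <;> ring
    rw [hM, det_explicit (t^n) (s^n) (1 - t^n - s^n) (p^n) (q^n) x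
      (hTpos n).le (hSpos n).le (hu n hn).le]
  -- trace
  have hTr : ∀ n : ℕ, ∑ i, (hA n).eigenvalues i = 1 + q^n - p^n := by
    intro n
    rw [← trace_eq_sum_eig (hA n), hAdef n, Matrix.trace_fin_three]
    norm_num [Matrix.cons_val_two, Matrix.vecHead, Matrix.vecTail]
    ring
  -- unique negative eigenvalue
  have huniq : ∀ n : ℕ, 1 ≤ n →
      ∃ i₀, (hA n).eigenvalues i₀ < 0 ∧ ∀ j, j ≠ i₀ → 0 < (hA n).eigenvalues j := by
    intro n hn
    apply unique_neg_of
    · have h0 := key n hn 0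
      simp only [sub_zero] at h0
      rw [h0]
      nlinarith [mul_pos (mul_pos (hPpos n) (hQpos n)) (hu n hn)]
    · rw [hTr n]
      have : p ^ n < 1 := pow_lt_one₀ hp0.le hp1 (by omega)
      have := hQpos n
      linarith
  constructor
  · -- first conjunct
    refine ⟨1, fun n hn => ?_⟩
    obtain ⟨i₀, hneg, hpos⟩ := huniq n hn
    rw [Finset.card_eq_one]
    refine ⟨i₀, ?_⟩
    ext j
    simp only [Finset.mem_filter, Finset.mem_univ, true_and, Finset.mem_singleton]
    constructor
    · intro hj
      by_contra hne
      exact absurd hj (not_lt.mpr (hpos j hne).le)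
    · rintro rfl
      exact hneg
  · -- second conjunct
    set m : ℕ → ℝ := fun n => ∑ i, min ((hA n).eigenvalues i) 0 with hm
    refine ⟨fun n => (∑ i, |(hA n).eigenvalues i|) - (1 + p^n + q^n - 2*(p*t)^n),
      fun n => by ring, ?_⟩
    have habs : ∀ n : ℕ, ∑ i, |(hA n).eigenvalues i|
        = (1 + q^n - p^n) - 2 * m n := by
      intro n
      rw [hm]
      simp only
      rw [← hTr n, Finset.mul_sum, ← Finset.sum_sub_distrib]
      exact Finset.sum_congr rfl fun i _ => abs_eq_sub_two_min _
    -- the normalized eigenvalue ratio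
    have hPT : ∀ n : ℕ, (0:ℝ) < (p*t)^n := fun n => pow_pos (mul_pos hp0 ht0) n
    have hg : Filter.Tendsto (fun n => (m n + p^n) / (p*t)^n) Filter.atTop (nhds 1) := by
      rw [Metric.tendsto_atTop]
      intro ε hε
      set ε' := min ε (1/2) with hε'def
      have hε'0 : 0 < ε' := lt_min hε (by norm_num)
      have hε'2 : ε' ≤ 1/2 := min_le_right _ _
      have hev : ∀ᶠ n in Filter.atTop, 1 ≤ n ∧ p^n < ε'/32 ∧ q^n < ε'/32
          ∧ t^n < ε'/32 ∧ s^n < ε'/32 := by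
        have l1 := (tendsto_pow_atTop_nhds_zero_of_lt_one hp0.le hp1).eventually_lt_const
          (by positivity : (0:ℝ) < ε'/32)
        have l2 := (tendsto_pow_atTop_nhds_zero_of_lt_one hq0.le hq1).eventually_lt_const
          (by positivity : (0:ℝ) < ε'/32)
        have l3 := (tendsto_pow_atTop_nhds_zero_of_lt_one ht0.le ht1).eventually_lt_const
          (by positivity : (0:ℝ) < ε'/32)
        have l4 := (tendsto_pow_atTop_nhds_zero_of_lt_one hs0.le hs1).eventually_lt_const
          (by positivity : (0:ℝ) < ε'/32)
        filter_upwards [Filter.eventually_ge_atTop 1, l1, l2, l3, l4] with n h1 h2 h3 h4 h5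
        exact ⟨h1, h2, h3, h4, h5⟩
      rw [Filter.eventually_atTop] at hev
      obtain ⟨N, hN⟩ := hev
      refine ⟨N, fun n hn => ?_⟩
      obtain ⟨hn1, hPd, hQd, hTd, hSd⟩ := hN n hn
      obtain ⟨i₀, hneg, hpos⟩ := huniq n hn1
      have hmn : m n = (hA n).eigenvalues i₀ := sum_min_eq _ i₀ hneg hpos
      have hPn := hPpos n; have hQn := hQpos n; have hTn := hTpos n; have hSn := hSpos n
      -- lower bound
      have hx₁ : -p^n + (1-ε')*(p^n*t^n) < (hA n).eigenvalues i₀ := by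
        set x := -p^n + (1-ε')*(p^n*t^n) with hxdef
        have hxneg : x < 0 := by
          have h1 : (1-ε')*(p^n*t^n) ≤ 1*(p^n*t^n) :=
            mul_le_mul_of_nonneg_right (by linarith) (mul_pos hPn hTn).le
          have h2 : p^n*t^n < p^n*1 := mul_lt_mul_of_pos_left (by linarith) hPn
          rw [hxdef]
          nlinarith [h1, h2]
        have hD : 0 < ∏ i, ((hA n).eigenvalues i - x) := by
          rw [key n hn1 x, hxdef]
          exact sign_lower ε' (p^n) (q^n) (t^n) (s^n) hε'0 hε'2 hPn hQn hTn hSn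
            hPd.le hQd.le hTd.le hSd.le
        have hrest : 0 < ∏ j ∈ Finset.univ.erase i₀, ((hA n).eigenvalues j - x) := by
          apply Finset.prod_pos
          intro j hj
          have := hpos j (Finset.ne_of_mem_erase hj)
          linarith
        rw [← Finset.mul_prod_erase Finset.univ _ (Finset.mem_univ i₀)] at hD
        rcases mul_pos_iff.mp hD with ⟨h1, _⟩ | ⟨_, h2⟩
        · linarith
        · linarith
      -- upper bound
      have hx₂ : (hA n).eigenvalues i₀ < -p^n + (1+ε')*(p^n*t^n) := by
        set x := -p^n + (1+ε')*(p^n*t^n) with hxdef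
        have hxneg : x < 0 := by
          have h1 : (1+ε')*(p^n*t^n) ≤ (3/2)*(p^n*t^n) :=
            mul_le_mul_of_nonneg_right (by linarith) (mul_pos hPn hTn).le
          have h2 : p^n*t^n < p^n*(1/2) := mul_lt_mul_of_pos_left (by linarith) hPn
          rw [hxdef]
          nlinarith [h1, h2]
        have hD : ∏ i, ((hA n).eigenvalues i - x) < 0 := by
          rw [key n hn1 x, hxdef]
          exact sign_upper ε' (p^n) (q^n) (t^n) (s^n) hε'0 hε'2 hPn hQn hTn hSn
            hPd.le hQd.le hTd.le hSd.le
        have hrest : 0 < ∏ j ∈ Finset.univ.erase i₀, ((hA n).eigenvalues j - x) := by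
          apply Finset.prod_pos
          intro j hj
          have := hpos j (Finset.ne_of_mem_erase hj)
          linarith
        rw [← Finset.mul_prod_erase Finset.univ _ (Finset.mem_univ i₀)] at hD
        rcases mul_neg_iff.mp hD with ⟨_, h2⟩ | ⟨h1, _⟩
        · linarith
        · linarith
      -- conclude
      have hPTn : (0:ℝ) < (p*t)^n := hPT n
      have hPTeq : (p*t)^n = p^n * t^n := mul_pow p t n
      have hlow : (1 - ε') * (p*t)^n < m n + p^n := by
        rw [hPTeq, hmn]; linarith
      have hhigh : m n + p^n < (1 + ε') * (p*t)^n := by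
        rw [hPTeq, hmn]; linarith
      have hg1 : (1 - ε') < (m n + p^n)/(p*t)^n := by
        rw [lt_div_iff₀ hPTn]; exact hlow
      have hg2 : (m n + p^n)/(p*t)^n < 1 + ε' := by
        rw [div_lt_iff₀ hPTn]; exact hhigh
      have hεε : ε' ≤ ε := min_le_left _ _
      rw [Real.dist_eq, abs_lt]
      constructor
      · linarith
      · linarith
    -- convert to the stated limit
    have heq : (fun n => ((∑ i, |(hA n).eigenvalues i|) - (1 + p^n + q^n - 2*(p*t)^n))
          / (p*t)^n)
        = fun n => -2 * ((m n + p^n) / (p*t)^n - 1) := by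
      funext n
      have h1 := habs n
      have h2 : (p*t)^n ≠ 0 := (hPT n).ne'
      field_simp
      nlinarith [h1]
    rw [heq]
    have := (hg.sub_const 1).const_mul (-2)
    simpa using this
end
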